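/- Let f : ℝ → ℝ be continuous, strictly positive, and c-periodic (c > 0). Suppose u is a nonzero solution of u'' + f·u = 0 whose zeros are isolated, λ > 0 with λ ≠ 1, and the function v(t) = u(αt) (for some constant α) is a nonzero solution of v'' + λ·f·v = 0. Then f is constant. -/

import Mathlib

/-- if `u` is a nonzero solution of `u'' + f·u = 0` with isolated
zeros and `v(t) = u(αt)` is a nonzero solution of `v'' + λ·f·v = 0` with
`λ > 0`, `λ ≠ 1`, then `f` (continuous, positive, `c`-periodic) is constant. -/
theorem eigenvalue_reparametrization_forces_constant
    (f : ℝ → ℝ) (hf : Continuous f) (hpos : ∀ t, 0 < f t)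
    (c : ℝ) (hc : 0 < c) (hper : Function.Periodic f c)
    (u : ℝ → ℝ) (hu2 : ContDiff ℝ 2 u) (hune : u ≠ 0)
    (hzeros : ∀ t, u t = 0 → ∃ ε > 0, ∀ s, s ≠ t → |s - t| < ε → u s ≠ 0)
    (hu : ∀ t, deriv (deriv u) t + f t * u t = 0)
    (lam : ℝ) (hlam : 0 < lam) (hlam1 : lam ≠ 1)
    (α : ℝ)
    (v : ℝ → ℝ) (hv : ∀ t, v t = u (α * t)) (hvne : v ≠ 0)
    (hveq : ∀ t, deriv (deriv v) t + lam * f t * v t = 0) :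
    ∀ s t, f s = f t := by
  -- step 0: α ≠ 0
  have hα : α ≠ 0 := by
    intro h0
    subst h0
    have hv0 : v = fun _ => u 0 := funext fun t => by rw [hv t, zero_mul]
    have hd : ∀ t, deriv (deriv v) t = 0 := by
      intro t; rw [hv0]; simp
    have hu00 : u 0 = 0 := by
      have h := hveq 0
      rw [hd 0, hv 0, zero_mul] at h
      have h' : (lam * f 0) * u 0 = 0 := by linarith
      rcases mul_eq_zero.mp h' with h'' | h''
      · exact absurd h'' (ne_of_gt (mul_pos hlam (hpos 0)))
      · exact h''
    exact hvne (by funext t; rw [hv0]; exact hu00)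
  -- differentiability facts
  have hdu : Differentiable ℝ u := hu2.differentiable two_ne_zero
  have hdu1 : ContDiff ℝ 1 (deriv u) := by
    have h := (contDiff_succ_iff_deriv (n := 1)).mp (by exact_mod_cast hu2)
    exact h.2.2
  have hdu' : Differentiable ℝ (deriv u) := hdu1.differentiable one_ne_zero
  -- first derivative of v
  have hv1 : deriv v = fun t => α * deriv u (α * t) := by
    funext t
    have h : HasDerivAt v (deriv u (α * t) * (α * 1)) t := by
      have hc1 : HasDerivAt (fun x : ℝ => α * x) (α * 1) t := (hasDerivAt_id t).const_mul α
      have := ((hdu (α * t)).hasDerivAt).comp t hc1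
      have hvf : v = u ∘ HMul.hMul α := funext fun s => hv s
      rw [hvf]; exact this
    rw [h.deriv]; ring
  -- second derivative of v
  have hv2 : ∀ t, deriv (deriv v) t = α ^ 2 * deriv (deriv u) (α * t) := by
    intro t
    have h : HasDerivAt (deriv v) (α * (deriv (deriv u) (α * t) * (α * 1))) t := by
      have hc1 : HasDerivAt (fun x : ℝ => α * x) (α * 1) t := (hasDerivAt_id t).const_mul α
      have h2 := (((hdu' (α * t)).hasDerivAt).comp t hc1).const_mul α
      rw [hv1]
      exact h2
    rw [h.deriv]; ring
  -- key pointwise identity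
  have key : ∀ t, (lam * f t - α ^ 2 * f (α * t)) * u (α * t) = 0 := by
    intro t
    have h1 := hveq t
    have h2 := hu (α * t)
    rw [hv2 t, hv t] at h1
    linear_combination h1 - α ^ 2 * h2
  -- the identity holds everywhere by density of nonzeros of u
  have hA : ∀ t, lam * f t = α ^ 2 * f (α * t) := by
    intro t
    by_contra hne
    have hgt : lam * f t - α ^ 2 * f (α * t) ≠ 0 := sub_ne_zero.mpr hne
    have hu0 : u (α * t) = 0 := by
      rcases mul_eq_zero.mp (key t) with h | h
      · exact absurd h hgt
      · exact h
    obtain ⟨ε, hε, hiso⟩ := hzeros (α * t) hu0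
    have hgc : Continuous fun s => lam * f s - α ^ 2 * f (α * s) := by
      apply Continuous.sub
      · exact continuous_const.mul hf
      · exact continuous_const.mul (hf.comp (continuous_const.mul continuous_id))
    have hev : ∀ᶠ s in nhds t, (fun s => lam * f s - α ^ 2 * f (α * s)) s ≠ 0 :=
      hgc.continuousAt.eventually_ne hgt
    rw [Metric.eventually_nhds_iff] at hev
    obtain ⟨δ, hδ, hball⟩ := hev
    have habs : 0 < |α| := abs_pos.mpr hα
    set m := min δ (ε / |α|) with hm
    have hm0 : 0 < m := lt_min hδ (div_pos hε habs)
    set s₀ := t + m / 2 with hs₀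
    have hdist : dist s₀ t < δ := by
      rw [hs₀, Real.dist_eq]
      have : |t + m / 2 - t| = m / 2 := by
        rw [show t + m / 2 - t = m / 2 by ring, abs_of_pos (by linarith)]
      rw [this]
      have := min_le_left δ (ε / |α|)
      linarith [hm ▸ this]
    have hgz : lam * f s₀ - α ^ 2 * f (α * s₀) ≠ 0 := hball hdist
    have hu0' : u (α * s₀) = 0 := by
      rcases mul_eq_zero.mp (key s₀) with h | h
      · exact absurd h hgz
      · exact h
    have hne2 : α * s₀ ≠ α * t := by
      intro h
      have : s₀ = t := mul_left_cancel₀ hα h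
      rw [hs₀] at this; linarith
    have hlt : |α * s₀ - α * t| < ε := by
      have : α * s₀ - α * t = α * (m / 2) := by rw [hs₀]; ring
      rw [this, abs_mul]
      have h1 : m ≤ ε / |α| := min_le_right _ _
      have h2 : |m / 2| = m / 2 := abs_of_pos (by linarith)
      rw [h2]
      calc |α| * (m / 2) ≤ |α| * (ε / |α| / 2) := by
            apply mul_le_mul_of_nonneg_left (by linarith) (le_of_lt habs)
        _ = ε / 2 := by field_simp
        _ < ε := by linarith
    exact hiso (α * s₀) hne2 hlt hu0'
  -- from t = 0: lam = α²
  have hlamα : lam = α ^ 2 := by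
    have h := hA 0
    rw [mul_zero] at h
    have := hpos 0
    exact mul_right_cancel₀ (ne_of_gt this) h
  -- so f (α t) = f t
  have hfα : ∀ t, f (α * t) = f t := by
    intro t
    have h := hA t
    rw [← hlamα] at h
    exact (mul_left_cancel₀ (ne_of_gt hlam) h.symm)
  -- |α| ≠ 1
  have hαne1 : |α| ≠ 1 := by
    intro h
    have : α ^ 2 = 1 := by
      have := sq_abs α
      rw [h] at this; simpa using this.symm
    exact hlam1 (hlamα.trans this)
  -- produce β with |β| < 1 and f (β t) = f t
  obtain ⟨β, hβ1, hβf⟩ : ∃ β : ℝ, |β| < 1 ∧ ∀ t, f (β * t) = f t := by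
    rcases lt_or_gt_of_ne hαne1 with h | h
    · exact ⟨α, h, hfα⟩
    · refine ⟨α⁻¹, ?_, ?_⟩
      · rw [abs_inv]
        rw [inv_lt_one_iff₀]
        right; exact h
      · intro t
        have := hfα (α⁻¹ * t)
        rw [← mul_assoc, mul_inv_cancel₀ hα, one_mul] at this
        exact this.symm
  -- iterate
  have hiter : ∀ (n : ℕ) (t : ℝ), f (β ^ n * t) = f t := by
    intro n
    induction n with
    | zero => intro t; simp
    | succ n ih =>
      intro t
      have : β ^ (n + 1) * t = β * (β ^ n * t) := by ring
      rw [this, hβf, ih]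
  -- limit argument: f t = f 0
  have hconst : ∀ t, f t = f 0 := by
    intro t
    have hlim : Filter.Tendsto (fun n : ℕ => β ^ n * t) Filter.atTop (nhds 0) := by
      have h := tendsto_pow_atTop_nhds_zero_of_abs_lt_one hβ1
      simpa using h.mul_const t
    have h2 : Filter.Tendsto (fun n : ℕ => f (β ^ n * t)) Filter.atTop (nhds (f 0)) :=
      (hf.continuousAt.tendsto).comp hlim
    have h3 : Filter.Tendsto (fun _ : ℕ => f t) Filter.atTop (nhds (f 0)) := by
      simpa [hiter] using h2
    exact tendsto_nhds_unique tendsto_const_nhds h3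
  intro s t
  rw [hconst s, hconst t]
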